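/- Let n ≥ 3. For any weight vector w = (w_1,...,w_n) of nonnegative integers, the multiset P(n)^w (containing w_i copies of each i-element subset of [n], for each i) admits a balanced partition P_1,...,P_n: that is, every set placed in class P_j contains j, and the class sizes differ pairwise by at most 1. -/

import Mathlib

set_option maxHeartbeats 2000000


-- m * C(u,i) ≤ u * C(m,i) for 1 ≤ i, 1 ≤ u ≤ m
lemma mul_choose_le_mul_choose {i u m : ℕ} (hi : 1 ≤ i) (hu : 1 ≤ u) (h : u ≤ m) :
    m * Nat.choose u i ≤ u * Nat.choose m i := by
  obtain ⟨u, rfl⟩ : ∃ v, u = v + 1 := ⟨u - 1, by omega⟩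
  obtain ⟨i, rfl⟩ : ∃ v, i = v + 1 := ⟨i - 1, by omega⟩
  obtain ⟨m, rfl⟩ : ∃ v, m = v + 1 := ⟨m - 1, by omega⟩
  have h1 := Nat.add_one_mul_choose_eq u i
  have h2 := Nat.add_one_mul_choose_eq m i
  have hc : Nat.choose u i ≤ Nat.choose m i := Nat.choose_le_choose i (by omega)
  have key : ((m+1) * Nat.choose (u+1) (i+1)) * (i+1) ≤ ((u+1) * Nat.choose (m+1) (i+1)) * (i+1) := by
    calc (m+1) * Nat.choose (u+1) (i+1) * (i+1)
        = (m+1) * (Nat.choose (u+1) (i+1) * (i+1)) := by ring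
      _ = (m+1) * (Nat.succ u * Nat.choose u i) := by rw [← h1]
      _ = (u+1) * ((m+1) * Nat.choose u i) := by
            simp only [Nat.succ_eq_add_one]; ring
      _ ≤ (u+1) * ((m+1) * Nat.choose m i) := by
            exact Nat.mul_le_mul_left _ (Nat.mul_le_mul_left _ hc)
      _ = (u+1) * (Nat.succ m * Nat.choose m i) := by rfl
      _ = (u+1) * (Nat.choose (m+1) (i+1) * (i+1)) := by rw [← h2]
      _ = (u+1) * Nat.choose (m+1) (i+1) * (i+1) := by ring
  exact Nat.le_of_mul_le_mul_right key (by omega)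

-- C(a,k) ≥ a for 1 ≤ k < a
lemma le_choose {a k : ℕ} (h1 : 1 ≤ k) (h2 : k < a) : a ≤ Nat.choose a k := by
  obtain ⟨k, rfl⟩ : ∃ v, k = v + 1 := ⟨k - 1, by omega⟩
  obtain ⟨a, rfl⟩ : ∃ v, a = v + 1 := ⟨a - 1, by omega⟩
  have h1 := Nat.add_one_mul_choose_eq a k
  have hck : Nat.choose (k+1) k ≤ Nat.choose a k := Nat.choose_le_choose k (by omega)
  have he : Nat.choose (k+1) k = k + 1 := by
    have := Nat.choose_symm (n := k+1) (k := 1) (by omega)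
    simpa using this.symm.trans (Nat.choose_one_right (k+1))
  have key : (a+1) * (k+1) ≤ Nat.choose (a+1) (k+1) * (k+1) := by
    calc (a+1) * (k+1) ≤ (a+1) * Nat.choose a k := by
          exact Nat.mul_le_mul_left _ (he ▸ hck)
      _ = Nat.choose (a+1) (k+1) * (k+1) := h1
  exact Nat.le_of_mul_le_mul_right key (by omega)



lemma core_int (N I C B D q r : ℤ) (hNB : N * B = I * C) (hC : C = B + D)
    (hBa : N - 1 ≤ B) (hCq : C = N * q + r) (hr0 : 0 ≤ r) (hrN : r < N)
    (hI2 : 2 ≤ I) (hIN : I < N) (hq0 : 0 ≤ q) : D ≤ (N - 1) * q := by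
  have hN0 : (0:ℤ) < N := by linarith
  have hI0 : (0:ℤ) < I := by linarith
  set m : ℤ := B - I * q with hm
  have hBm : B - m = I * q := by rw [hm]; ring
  have hNm : N * m = I * r := by rw [hm]; linear_combination I * hCq + hNB
  have hm0 : 0 ≤ m := by
    have h0 : N * 0 ≤ N * m := by
      rw [hNm, mul_zero]; exact mul_nonneg (by linarith) hr0
    exact le_of_mul_le_mul_left h0 hN0
  have hmI : m ≤ I - 1 := by
    have hlt : N * m < N * I := by
      rw [hNm]
      calc I * r ≤ I * (N - 1) := mul_le_mul_of_nonneg_left (by linarith) (by linarith)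
        _ < N * I := by nlinarith
    have := lt_of_mul_lt_mul_left hlt (by linarith : (0:ℤ) ≤ N)
    linarith
  have key : (N - 1) * m ≤ (I - 1) * B :=
    calc (N - 1) * m ≤ (N - 1) * (I - 1) := mul_le_mul_of_nonneg_left hmI (by linarith)
      _ = (I - 1) * (N - 1) := by ring
      _ ≤ (I - 1) * B := mul_le_mul_of_nonneg_left hBa (by linarith)
  have e1 : (N - I) * m = (N - 1) * m - (I - 1) * m := by ring
  have e2 : (I - 1) * (I * q) = (I - 1) * B - (I - 1) * m := by rw [← hBm]; ring
  have step2 : (N - I) * m ≤ (I - 1) * (I * q) := by linarith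
  have e3 : I * ((N - I) * r) = N * ((N - I) * m) := by linear_combination (I - N) * hNm
  have h8' : N * ((N - I) * m) ≤ N * ((I - 1) * (I * q)) :=
    mul_le_mul_of_nonneg_left step2 (by linarith)
  have e4 : N * ((I - 1) * (I * q)) = I * (N * ((I - 1) * q)) := by ring
  have step3 : (N - I) * r ≤ N * ((I - 1) * q) := by
    have h8 : I * ((N - I) * r) ≤ I * (N * ((I - 1) * q)) := by linarith
    exact le_of_mul_le_mul_left h8 hI0
  have hND : N * D = (N - I) * C := by linear_combination (-N) * hC - hNB
  have e5 : N * D = (N - I) * (N * q) + (N - I) * r := by rw [hND, hCq]; ring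
  have e6 : (N - I) * (N * q) + N * ((I - 1) * q) = N * ((N - 1) * q) := by ring
  have final : N * D ≤ N * ((N - 1) * q) := by linarith
  exact le_of_mul_le_mul_left final hN0

lemma core_ineq {a c : ℕ} (ha : 2 ≤ a) (hc : 1 ≤ c) (hca : c + 1 ≤ a) :
    Nat.choose a (c+1) ≤ a * (Nat.choose (a+1) (c+1) / (a+1)) := by
  have h3 : (a+1) * Nat.choose a c = Nat.choose (a+1) (c+1) * (c+1) :=
    Nat.add_one_mul_choose_eq a c
  have h4 : Nat.choose (a+1) (c+1) = Nat.choose a c + Nat.choose a (c+1) :=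
    Nat.choose_succ_succ a c
  have h5 : a ≤ Nat.choose a c := le_choose hc (by omega)
  have h1 : Nat.choose (a+1) (c+1) = (a+1) * (Nat.choose (a+1) (c+1) / (a+1)) + Nat.choose (a+1) (c+1) % (a+1) :=
    (Nat.div_add_mod _ _).symm
  have h2 : Nat.choose (a+1) (c+1) % (a+1) < a + 1 := Nat.mod_lt _ (by omega)
  have key := core_int ((a:ℤ)+1) ((c:ℤ)+1) (Nat.choose (a+1) (c+1) : ℤ)
      (Nat.choose a c : ℤ) (Nat.choose a (c+1) : ℤ)
      ((Nat.choose (a+1) (c+1) / (a+1) : ℕ) : ℤ)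
      ((Nat.choose (a+1) (c+1) % (a+1) : ℕ) : ℤ)
      (by exact_mod_cast h3.trans (by ring_nf))
      (by exact_mod_cast h4) (by push_cast; omega) (by exact_mod_cast h1)
      (by positivity) (by exact_mod_cast h2) (by push_cast; omega) (by push_cast; omega)
      (by positivity)
  have : (Nat.choose a (c+1) : ℤ) ≤ (a : ℤ) * ((Nat.choose (a+1) (c+1) / (a+1) : ℕ) : ℤ) := by
    have e : ((a:ℤ)+1) - 1 = (a:ℤ) := by ring
    rwa [e] at key
  exact_mod_cast this

lemma lemA {n i u : ℕ} (hn : 3 ≤ n) (hi : 1 ≤ i) (hu : 1 ≤ u) (hun : u < n) :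
    Nat.choose u i ≤ u * (Nat.choose n i / n) := by
  rcases Nat.lt_or_ge u i with h | h
  · simp [Nat.choose_eq_zero_of_lt h]
  rcases Nat.eq_or_lt_of_le hi with h1 | h2
  · rw [← h1]
    simp [Nat.choose_one_right, Nat.div_self (by omega : 0 < n)]
  · have hcore : Nat.choose (n-1) i ≤ (n-1) * (Nat.choose n i / n) := by
      have hco := core_ineq (a := n-1) (c := i-1) (by omega) (by omega) (by omega)
      have e1 : i - 1 + 1 = i := by omega
      have e2 : n - 1 + 1 = n := by omega
      rwa [e1, e2] at hco
    have hmono : (n-1) * Nat.choose u i ≤ u * Nat.choose (n-1) i :=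
      mul_choose_le_mul_choose hi hu (by omega)
    have hchain : (n-1) * Nat.choose u i ≤ (n-1) * (u * (Nat.choose n i / n)) := by
      calc (n-1) * Nat.choose u i ≤ u * Nat.choose (n-1) i := hmono
        _ ≤ u * ((n-1) * (Nat.choose n i / n)) := Nat.mul_le_mul_left _ hcore
        _ = (n-1) * (u * (Nat.choose n i / n)) := by ring
    exact Nat.le_of_mul_le_mul_left hchain (by omega)



-- counting lemma
lemma count_sum {β : Type*} [DecidableEq β] (w : ℕ → ℕ) (U : Finset β) :
    ∑ S ∈ U.powerset.filter (fun S => S.Nonempty), w S.card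
      = ∑ i ∈ Finset.Icc 1 U.card, w i * Nat.choose U.card i := by
  rw [Finset.sum_filter]
  rw [Finset.powerset_card_disjiUnion, Finset.sum_disjiUnion _ _ (Finset.pairwise_disjoint_powersetCard U |>.set_pairwise _)]
  have h1 : ∀ i ∈ Finset.range (U.card + 1),
      (∑ S ∈ Finset.powersetCard i U, if S.Nonempty then w S.card else 0)
        = if 1 ≤ i then w i * Nat.choose U.card i else 0 := by
    intro i hi
    have : ∀ S ∈ Finset.powersetCard i U, (if S.Nonempty then w S.card else 0)
        = if 1 ≤ i then w i else 0 := by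
      intro S hS
      obtain ⟨-, hcard⟩ := Finset.mem_powersetCard.mp hS
      subst hcard
      by_cases h : S.Nonempty
      · have : 1 ≤ S.card := Finset.card_pos.mpr h
        rw [if_pos h, if_pos this]
      · have : ¬ (1 ≤ S.card) := by
          simpa [Finset.card_pos] using h
        rw [if_neg h, if_neg this]
    rw [Finset.sum_congr rfl this, Finset.sum_const, Finset.card_powersetCard]
    by_cases h : 1 ≤ i <;> simp [h, mul_comm]
  rw [Finset.sum_congr rfl h1, ← Finset.sum_filter]
  congr 1
  ext i
  simp only [Finset.mem_filter, Finset.mem_range, Finset.mem_Icc]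
  omega

lemma sum_bound {n : ℕ} (hn : 3 ≤ n) (w : ℕ → ℕ) (U : Finset (Fin n)) (hU : U.card < n) :
    ∑ S ∈ U.powerset.filter (fun S => S.Nonempty), w S.card
      ≤ U.card * ((∑ S ∈ (Finset.univ : Finset (Finset (Fin n))).filter (fun S => S.Nonempty), w S.card) / n) := by
  set N := ∑ S ∈ (Finset.univ : Finset (Finset (Fin n))).filter (fun S => S.Nonempty), w S.card with hN
  have hNval : N = ∑ i ∈ Finset.Icc 1 n, w i * Nat.choose n i := by
    rw [hN, ← Finset.powerset_univ, count_sum w Finset.univ, Finset.card_univ, Fintype.card_fin]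
  rcases Nat.eq_zero_or_pos U.card with h0 | hpos
  · rw [count_sum, h0]
    simp
  rw [count_sum]
  have step1 : ∀ i ∈ Finset.Icc 1 U.card, w i * Nat.choose U.card i
      ≤ U.card * (w i * (Nat.choose n i / n)) := by
    intro i hi
    rw [Finset.mem_Icc] at hi
    calc w i * Nat.choose U.card i ≤ w i * (U.card * (Nat.choose n i / n)) :=
          Nat.mul_le_mul_left _ (lemA hn hi.1 hpos hU)
      _ = U.card * (w i * (Nat.choose n i / n)) := by ring
  calc ∑ i ∈ Finset.Icc 1 U.card, w i * Nat.choose U.card i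
      ≤ ∑ i ∈ Finset.Icc 1 U.card, U.card * (w i * (Nat.choose n i / n)) :=
        Finset.sum_le_sum step1
    _ = U.card * ∑ i ∈ Finset.Icc 1 U.card, w i * (Nat.choose n i / n) := by
        rw [Finset.mul_sum]
    _ ≤ U.card * (N / n) := by
        apply Nat.mul_le_mul_left
        rw [Nat.le_div_iff_mul_le (by omega : 0 < n)]
        calc (∑ i ∈ Finset.Icc 1 U.card, w i * (Nat.choose n i / n)) * n
            = ∑ i ∈ Finset.Icc 1 U.card, w i * ((Nat.choose n i / n) * n) := by
              rw [Finset.sum_mul]; apply Finset.sum_congr rfl; intros; ring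
          _ ≤ ∑ i ∈ Finset.Icc 1 U.card, w i * Nat.choose n i := by
              apply Finset.sum_le_sum
              intro i _
              exact Nat.mul_le_mul_left _ (Nat.div_mul_le_self _ _)
          _ ≤ ∑ i ∈ Finset.Icc 1 n, w i * Nat.choose n i := by
              apply Finset.sum_le_sum_of_subset
              apply Finset.Icc_subset_Icc_right
              omega
          _ = N := hNval.symm



theorem exists_balanced_partition (n : ℕ) (hn : 3 ≤ n) (w : ℕ → ℕ) :
    ∃ P : Fin n → Multiset (Finset (Fin n)),
      (∑ j : Fin n, P j) =
        ∑ S ∈ Finset.univ.filter (fun S : Finset (Fin n) => S.Nonempty),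
          Multiset.replicate (w S.card) S ∧
      (∀ j : Fin n, ∀ X ∈ P j, j ∈ X) ∧
      (∀ i j : Fin n, Multiset.card (P i) ≤ Multiset.card (P j) + 1) := by
  classical
  have hn0 : 0 < n := by omega
  set F : Finset (Finset (Fin n)) := Finset.univ.filter (fun S : Finset (Fin n) => S.Nonempty)
    with hF
  set I : Finset ((_ : Finset (Fin n)) × ℕ) := F.sigma (fun S => Finset.range (w S.card))
    with hIdef
  set N : ℕ := I.card with hNdef
  have hNsum : N = ∑ S ∈ F, w S.card := by
    rw [hNdef, hIdef, Finset.card_sigma]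
    simp
  obtain ⟨R, hRsub, hRcard⟩ := Finset.exists_subset_card_eq (s := (Finset.univ : Finset (Fin n))) (n := N % n)
    (by
      have := Nat.mod_lt N hn0
      simp only [Finset.card_univ, Fintype.card_fin]
      omega)
  set l : Fin n → ℕ := fun j => N / n + (if j ∈ R then 1 else 0) with hl
  have hql : ∀ j, N / n ≤ l j ∧ l j ≤ N / n + 1 := by
    intro j
    by_cases h : j ∈ R <;> simp [hl, h]
  have hsuml : ∑ j : Fin n, l j = N := by
    rw [hl]
    rw [Finset.sum_add_distrib, Finset.sum_const, Finset.card_univ, Fintype.card_fin,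
      Finset.sum_ite_mem, Finset.univ_inter, Finset.sum_const, hRcard, smul_eq_mul,
      smul_eq_mul, mul_one]
    exact Nat.div_add_mod N n
  set t : ↥I → Finset (Fin n × ℕ) :=
    fun x => x.val.1.biUnion (fun j => {j} ×ˢ Finset.range (l j)) with ht
  have hmem_t : ∀ (x : ↥I) (p : Fin n × ℕ), p ∈ t x ↔ p.1 ∈ x.val.1 ∧ p.2 < l p.1 := by
    intro x p
    simp only [ht, Finset.mem_biUnion, Finset.mem_product, Finset.mem_singleton,
      Finset.mem_range]
    constructor
    · rintro ⟨j, hj, h1, h2⟩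
      subst h1
      exact ⟨hj, h2⟩
    · rintro ⟨h1, h2⟩
      exact ⟨p.1, h1, rfl, h2⟩
  -- Hall condition
  have hall : ∀ s : Finset ↥I, s.card ≤ (s.biUnion t).card := by
    intro s
    set U : Finset (Fin n) := s.biUnion (fun x => x.val.1) with hU
    have hUnion : s.biUnion t = U.biUnion (fun j => {j} ×ˢ Finset.range (l j)) := by
      rw [hU, Finset.biUnion_biUnion]
    have hcardU : (s.biUnion t).card = ∑ j ∈ U, l j := by
      rw [hUnion, Finset.card_biUnion]
      · apply Finset.sum_congr rfl
        intro j _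
        rw [Finset.card_product, Finset.card_singleton, Finset.card_range, one_mul]
      · intro j _ j' _ hne
        simp only [Function.onFun]
        rw [Finset.disjoint_left]
        intro p hp hp'
        rw [Finset.mem_product, Finset.mem_singleton] at hp hp'
        exact hne (hp.1 ▸ hp'.1 ▸ rfl)
    have hsub : s.card ≤ ∑ S ∈ U.powerset.filter (fun S => S.Nonempty), w S.card := by
      rw [← Finset.card_image_of_injective s Subtype.val_injective]
      have himg : s.image (fun x : ↥I => x.val)
          ⊆ (U.powerset.filter (fun S => S.Nonempty)).sigma
              (fun S => Finset.range (w S.card)) := by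
        intro y hy
        obtain ⟨x, hx, rfl⟩ := Finset.mem_image.mp hy
        have hxI : x.val ∈ F.sigma (fun S => Finset.range (w S.card)) := x.property
        obtain ⟨hx1, hx2⟩ := Finset.mem_sigma.mp hxI
        rw [Finset.mem_sigma]
        refine ⟨?_, hx2⟩
        rw [Finset.mem_filter, Finset.mem_powerset]
        constructor
        · intro a ha
          rw [hU]
          exact Finset.mem_biUnion.mpr ⟨x, hx, ha⟩
        · rw [hF, Finset.mem_filter] at hx1
          exact hx1.2
      calc (s.image (fun x : ↥I => x.val)).card
          ≤ ((U.powerset.filter (fun S => S.Nonempty)).sigma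
              (fun S => Finset.range (w S.card))).card := Finset.card_le_card himg
        _ = ∑ S ∈ U.powerset.filter (fun S => S.Nonempty), w S.card := by
            rw [Finset.card_sigma]
            simp
    rcases Nat.lt_or_ge U.card n with hUn | hUn
    · rw [hcardU]
      calc s.card ≤ ∑ S ∈ U.powerset.filter (fun S => S.Nonempty), w S.card := hsub
        _ ≤ U.card * (N / n) := by
            have := sum_bound hn w U hUn
            rwa [← hF, ← hNsum] at this
        _ = ∑ _j ∈ U, (N / n) := by rw [Finset.sum_const, smul_eq_mul]
        _ ≤ ∑ j ∈ U, l j := Finset.sum_le_sum (fun j _ => (hql j).1)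
    · have hUuniv : U = Finset.univ := by
        apply Finset.eq_univ_of_card
        have h1 : U.card ≤ Fintype.card (Fin n) := by
          simpa using Finset.card_le_univ U
        rw [Fintype.card_fin] at h1 ⊢
        omega
      rw [hcardU, hUuniv, hsuml]
      calc s.card ≤ Fintype.card ↥I := Finset.card_le_univ s
        _ = N := by rw [Fintype.card_coe]
  obtain ⟨f, hfinj, hft⟩ := (Finset.all_card_le_biUnion_card_iff_exists_injective t).mp hall
  have hfx : ∀ x : ↥I, (f x).1 ∈ x.val.1 ∧ (f x).2 < l (f x).1 :=
    fun x => (hmem_t x (f x)).mp (hft x)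
  set P : Fin n → Multiset (Finset (Fin n)) :=
    fun j => (Finset.univ.filter (fun x : ↥I => (f x).1 = j)).val.map
      (fun x : ↥I => x.val.1) with hP
  -- loads
  have hload_le : ∀ j, (Finset.univ.filter (fun x : ↥I => (f x).1 = j)).card ≤ l j := by
    intro j
    have hmaps : ∀ x ∈ Finset.univ.filter (fun x : ↥I => (f x).1 = j),
        f x ∈ {j} ×ˢ Finset.range (l j) := by
      intro x hx
      rw [Finset.mem_filter] at hx
      rw [Finset.mem_product, Finset.mem_singleton, Finset.mem_range]
      exact ⟨hx.2, hx.2 ▸ (hfx x).2⟩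
    calc (Finset.univ.filter (fun x : ↥I => (f x).1 = j)).card
        ≤ ({j} ×ˢ Finset.range (l j)).card :=
          Finset.card_le_card_of_injOn f hmaps (hfinj.injOn)
      _ = l j := by rw [Finset.card_product, Finset.card_singleton, Finset.card_range, one_mul]
  have hload_sum : ∑ j : Fin n, (Finset.univ.filter (fun x : ↥I => (f x).1 = j)).card = N := by
    rw [← Finset.card_eq_sum_card_fiberwise
      (f := fun x : ↥I => (f x).1) (t := Finset.univ) (fun x _ => Finset.mem_univ _)]
    rw [Finset.card_univ, Fintype.card_coe]
  have hload_eq : ∀ j, (Finset.univ.filter (fun x : ↥I => (f x).1 = j)).card = l j := by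
    have := (Finset.sum_eq_sum_iff_of_le (fun j (_ : j ∈ Finset.univ) => hload_le j)).mp
      (by rw [hload_sum, hsuml])
    exact fun j => this j (Finset.mem_univ j)
  have hcardP : ∀ j, Multiset.card (P j) = l j := by
    intro j
    rw [hP]
    simp only [Multiset.card_map]
    rw [← Finset.card_def]  -- card of val
    exact hload_eq j
  refine ⟨P, ?_, ?_, ?_⟩
  · -- the partition sums to the whole multiset
    have hpart : ∀ s : Multiset ↥I,
        ∑ j : Fin n, s.filter (fun x => (f x).1 = j) = s := by
      intro s
      induction s using Multiset.induction_on with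
      | empty => simp
      | cons a s ih =>
        simp only [Multiset.filter_cons]
        rw [Finset.sum_add_distrib, ih]
        congr 1
        have : ∀ j : Fin n, (if (f a).1 = j then ({a} : Multiset ↥I) else 0)
            = if (f a).1 = j then ({a} : Multiset ↥I) else 0 := fun _ => rfl
        rw [Finset.sum_ite_eq]
        simp
    have step1 : ∑ j : Fin n, P j
        = Multiset.map (fun x : ↥I => x.val.1)
            (∑ j : Fin n, (Finset.univ.filter (fun x : ↥I => (f x).1 = j)).val) := by
      simp only [hP]
      exact (map_sum (Multiset.mapAddMonoidHom (fun x : ↥I => x.val.1))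
        (fun j => (Finset.univ.filter (fun x : ↥I => (f x).1 = j)).val) Finset.univ).symm
    rw [step1]
    have step2 : ∑ j : Fin n, (Finset.univ.filter (fun x : ↥I => (f x).1 = j)).val
        = (Finset.univ : Finset ↥I).val := by
      simp only [Finset.filter_val]
      exact hpart _
    rw [step2]
    have step3 : Multiset.map (fun x : ↥I => x.val.1) (Finset.univ : Finset ↥I).val
        = Multiset.map (fun y : (_ : Finset (Fin n)) × ℕ => y.1) I.val := by
      rw [Finset.univ_eq_attach, Finset.attach_val]
      exact Multiset.attach_map_val' I.val (fun y => y.1)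
    rw [step3]
    -- now : I.val.map Sigma.fst = ∑ S in F, replicate (w S.card) S
    rw [hIdef]
    have : (F.sigma (fun S => Finset.range (w S.card))).val
        = F.val.bind (fun S => ((Finset.range (w S.card)).val.map (Sigma.mk S))) := rfl
    rw [this, Multiset.map_bind]
    have : ∀ S, (((Finset.range (w S.card)).val.map (Sigma.mk S)).map
        (fun y : (_ : Finset (Fin n)) × ℕ => y.1))
        = Multiset.replicate (w S.card) S := by
      intro S
      rw [Multiset.map_map]
      simp [Function.comp]
    rw [Multiset.bind_congr (fun S _ => this S)]
    -- bind of constant-valued function = finset sum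
    rw [Finset.sum_eq_multiset_sum]
    rfl
  · -- membership
    intro j X hX
    rw [hP] at hX
    obtain ⟨x, hx, rfl⟩ := Multiset.mem_map.mp hX
    have hx' : x ∈ Finset.univ.filter (fun x : ↥I => (f x).1 = j) := hx
    rw [Finset.mem_filter] at hx'
    exact hx'.2 ▸ (hfx x).1
  · -- balance
    intro i j
    rw [hcardP i, hcardP j]
    have h1 := (hql i).2
    have h2 := (hql j).1
    omega
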